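/- arXiv:1701.02515 — 3 statements merged into one kernel-verified Lean document; each statement's English description precedes it below -/
import Mathlib

section
/- Let Σ be a Heisenberg group with commutator subgroup [Σ,Σ] of prime order p, let A be a maximal abelian subgroup of Σ, and let χ : A → ℂ^× be a genuine character (i.e., χ is nontrivial on [Σ,Σ]). Then for every e ∈ Σ with e ∉ A, the conjugate character χ^e differs from χ; equivalently, there exists a ∈ A with χ(e a e^{-1} a^{-1}) ≠ 1. In other words, the action of Σ/A on genuine characters of A by conjugation is faithful. -/
/-- A maximal abelian subgroup of a group: it is abelian, and any abelian subgroup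
containing it equals it. -/
def IsMaxAbelian {G : Type*} [Group G] (A : Subgroup G) : Prop :=
  (∀ x ∈ A, ∀ y ∈ A, x * y = y * x) ∧
  ∀ B : Subgroup G, (∀ x ∈ B, ∀ y ∈ B, x * y = y * x) → A ≤ B → B = A

/-- The closure of a set of pairwise commuting elements is abelian. -/
lemma closure_comm {G : Type*} [Group G] (S : Set G)
    (h : ∀ x ∈ S, ∀ y ∈ S, x * y = y * x) :
    ∀ x ∈ Subgroup.closure S, ∀ y ∈ Subgroup.closure S, x * y = y * x := by
  intro x hx
  induction hx using Subgroup.closure_induction with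
  | mem a ha =>
    intro y hy
    induction hy using Subgroup.closure_induction with
    | mem b hb => exact h a ha b hb
    | one => group
    | mul b c _ _ hb hc => rw [← mul_assoc, hb, mul_assoc, hc, mul_assoc]
    | inv b _ hb =>
      calc a * b⁻¹ = b⁻¹ * (b * a) * b⁻¹ := by group
        _ = b⁻¹ * (a * b) * b⁻¹ := by rw [hb]
        _ = b⁻¹ * a := by group
  | one => intro y _; group
  | mul a c _ _ ha hc =>
    intro y hy
    rw [mul_assoc, hc y hy, ← mul_assoc, ha y hy, mul_assoc]
  | inv a _ ha =>
    intro y hy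
    calc a⁻¹ * y = a⁻¹ * (y * a) * a⁻¹ := by group
      _ = a⁻¹ * (a * y) * a⁻¹ := by rw [ha y hy]
      _ = y * a⁻¹ := by group

open scoped commutatorElement

/-- Let `Σ` be a Heisenberg group with commutator subgroup of prime order `p`,
`A` a maximal abelian subgroup, and `χ : A → ℂˣ` a genuine character (nontrivial on `[Σ,Σ]`).
Then for every `e ∈ Σ` with `e ∉ A` there is `a ∈ A` with `χ(⁅e,a⁆) ≠ 1` (where
`⁅e,a⁆ = e a e⁻¹ a⁻¹`); i.e. the conjugation action of `Σ/A` on genuine characters of `A`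
is faithful. -/
theorem heisenberg_conjugation_action_faithful
    {G : Type*} [Group G] {p : ℕ} (hp : p.Prime)
    (hfin : (Subgroup.center G).FiniteIndex)
    (hcomm : commutator G ≤ Subgroup.center G)
    (hcard : Nat.card (commutator G) = p)
    (A : Subgroup G) (hA : IsMaxAbelian A)
    (χ : ↥A →* ℂˣ)
    (hgen : ∃ (c : G) (_ : c ∈ commutator G) (hcA : c ∈ A), χ ⟨c, hcA⟩ ≠ 1) :
    ∀ e : G, e ∉ A → ∃ (a : G) (_ : a ∈ A) (h : ⁅e, a⁆ ∈ A), χ ⟨⁅e, a⁆, h⟩ ≠ 1 := by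
  -- the commutator subgroup is central, hence contained in the maximal abelian `A`
  have hKA : commutator G ≤ A := by
    have hS : ∀ x ∈ (↑A ∪ ↑(commutator G) : Set G), ∀ y ∈ (↑A ∪ ↑(commutator G) : Set G),
        x * y = y * x := by
      rintro x (hx | hx) y (hy | hy)
      · exact hA.1 x hx y hy
      · exact (Subgroup.mem_center_iff.mp (hcomm hy)) x
      · exact ((Subgroup.mem_center_iff.mp (hcomm hx)) y).symm
      · exact (Subgroup.mem_center_iff.mp (hcomm hy)) x
    have hB := hA.2 (Subgroup.closure (↑A ∪ ↑(commutator G)))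
      (closure_comm _ hS)
      (fun x hx => Subgroup.subset_closure (Or.inl hx))
    intro x hx
    rw [← hB]
    exact Subgroup.subset_closure (Or.inr hx)
  intro e he
  by_contra hcon
  push_neg at hcon
  -- the kernel of χ restricted to the commutator subgroup is trivial
  haveI : Fact (Nat.card (commutator G)).Prime := ⟨hcard ▸ hp⟩
  set φ : ↥(commutator G) →* ℂˣ := χ.comp (Subgroup.inclusion hKA) with hφ
  have hker : φ.ker = ⊥ := by
    rcases φ.ker.eq_bot_or_eq_top_of_prime_card with h | h
    · exact h
    · exfalso
      obtain ⟨c, hc, hcA, hne⟩ := hgen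
      apply hne
      have : (⟨c, hc⟩ : ↥(commutator G)) ∈ φ.ker := h ▸ Subgroup.mem_top _
      simpa [hφ, MonoidHom.mem_ker, Subgroup.inclusion] using this
  -- hence `e` commutes with every element of `A`
  have hce : ∀ x ∈ A, e * x = x * e := by
    intro x hx
    have hcm : ⁅e, x⁆ ∈ commutator G :=
      Subgroup.commutator_mem_commutator (Subgroup.mem_top e) (Subgroup.mem_top x)
    have h1 : χ ⟨⁅e, x⁆, hKA hcm⟩ = 1 := hcon x hx (hKA hcm)
    have : (⟨⁅e, x⁆, hcm⟩ : ↥(commutator G)) ∈ φ.ker := by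
      simpa [hφ, MonoidHom.mem_ker, Subgroup.inclusion] using h1
    rw [hker, Subgroup.mem_bot] at this
    have h2 : ⁅e, x⁆ = 1 := by
      simpa using congrArg Subtype.val this
    exact commutatorElement_eq_one_iff_mul_comm.mp h2
  -- so `A` together with `e` generates an abelian subgroup, contradicting maximality
  apply he
  have hS : ∀ x ∈ insert e (↑A : Set G), ∀ y ∈ insert e (↑A : Set G), x * y = y * x := by
    rintro x (rfl | hx) y (rfl | hy)
    · rfl
    · exact hce y hy
    · exact (hce x hx).symm
    · exact hA.1 x hx y hy
  have hB := hA.2 (Subgroup.closure (insert e ↑A)) (closure_comm _ hS) ?_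
  · rw [← hB]
    exact Subgroup.subset_closure (Or.inl rfl)
  · intro x hx
    exact Subgroup.subset_closure (Or.inr hx)
end

section
/- Let Σ be a Heisenberg group with commutator subgroup [Σ,Σ] of prime order p, let Σ₁ be a maximal abelian subgroup of Σ, and let λ₁, λ₂ : Σ₁ → ℂ^× be genuine characters. Then Ind_{Σ₁}^{Σ} λ₁ ≅ Ind_{Σ₁}^{Σ} λ₂ if and only if λ₁ = λ₂^s for some s ∈ Σ, where λ₂^s(x) = λ₂(s x s^{-1}). -/
/-- The space of the representation of `G` induced from a character `lam` of a subgroup `A`: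
functions `f : G → ℂ` with `f(ax) = lam(a) f(x)` for `a ∈ A`. -/
noncomputable def IndSpace {G : Type*} [Group G] (A : Subgroup G) (lam : ↥A →* ℂˣ) :
    Submodule ℂ (G → ℂ) where
  carrier := {f | ∀ (a : ↥A) (x : G), f (↑a * x) = (lam a : ℂ) * f x}
  add_mem' := by
    intro f g hf hg a x
    simp only [Pi.add_apply, hf a x, hg a x]
    ring
  zero_mem' := by
    intro a x
    simp
  smul_mem' := by
    intro c f hf a x
    simp only [Pi.smul_apply, hf a x, smul_eq_mul]
    ring

theorem mem_IndSpace {G : Type*} [Group G] {A : Subgroup G} {lam : ↥A →* ℂˣ} {f : G → ℂ} :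
    f ∈ IndSpace A lam ↔ ∀ (a : ↥A) (x : G), f (↑a * x) = (lam a : ℂ) * f x :=
  Iff.rfl

/-- The representation of `G` induced from a character `lam` of a subgroup `A`,
acting by right translation on `IndSpace A lam`. -/
noncomputable def IndRep {G : Type*} [Group G] (A : Subgroup G) (lam : ↥A →* ℂˣ) :
    Representation ℂ G ↥(IndSpace A lam) where
  toFun g :=
    { toFun := fun f => ⟨fun x => (f : G → ℂ) (x * g), by
        intro a x
        have h := mem_IndSpace.mp f.2 a (x * g)
        simpa [mul_assoc] using h⟩
      map_add' := by intro f₁ f₂; ext x; rfl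
      map_smul' := by intro c f; ext x; rfl }
  map_one' := by
    ext f x
    simp
  map_mul' := by
    intro g h
    ext f x
    simp [mul_assoc]

/-- A representation is irreducible if the space is nonzero and the only invariant
subspaces are `⊥` and `⊤`. -/
def IsIrredRep {G : Type*} [Group G] {V : Type*} [AddCommGroup V] [Module ℂ V]
    (ρ : Representation ℂ G V) : Prop :=
  (∃ v : V, v ≠ 0) ∧
  ∀ W : Submodule ℂ V, (∀ g : G, ∀ w ∈ W, ρ g w ∈ W) → W = ⊥ ∨ W = ⊤

/-- Two representations are isomorphic if there is an equivariant linear equivalence. -/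
def RepIso {G : Type*} [Group G] {V₁ V₂ : Type*} [AddCommGroup V₁] [Module ℂ V₁]
    [AddCommGroup V₂] [Module ℂ V₂]
    (ρ₁ : Representation ℂ G V₁) (ρ₂ : Representation ℂ G V₂) : Prop :=
  ∃ e : V₁ ≃ₗ[ℂ] V₂, ∀ (g : G) (v : V₁), e (ρ₁ g v) = ρ₂ g (e v)

/-- Let `Σ` be a Heisenberg group with commutator subgroup of prime order `p`,
`Σ₁` a maximal abelian subgroup, and `λ₁, λ₂ : Σ₁ → ℂˣ` genuine characters.  Then
`Ind_{Σ₁}^{Σ} λ₁ ≅ Ind_{Σ₁}^{Σ} λ₂` if and only if `λ₁ = λ₂ˢ` for some `s ∈ Σ`,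
where `λ₂ˢ(x) = λ₂(s x s⁻¹)`. -/
theorem heisenberg_induced_iso_iff_conjugate
    {G : Type*} [Group G] {p : ℕ} (hp : p.Prime)
    (hfin : (Subgroup.center G).FiniteIndex)
    (hcomm : commutator G ≤ Subgroup.center G)
    (hcard : Nat.card (commutator G) = p)
    (S₁ : Subgroup G) (hS₁ : IsMaxAbelian S₁)
    (lam₁ lam₂ : ↥S₁ →* ℂˣ)
    (hgen₁ : ∃ (c : G) (_ : c ∈ commutator G) (hcA : c ∈ S₁), lam₁ ⟨c, hcA⟩ ≠ 1)
    (hgen₂ : ∃ (c : G) (_ : c ∈ commutator G) (hcA : c ∈ S₁), lam₂ ⟨c, hcA⟩ ≠ 1) :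
    RepIso (IndRep S₁ lam₁) (IndRep S₁ lam₂) ↔
      ∃ s : G, ∀ (x : G) (hx : x ∈ S₁) (hx' : s * x * s⁻¹ ∈ S₁),
        lam₁ ⟨x, hx⟩ = lam₂ ⟨s * x * s⁻¹, hx'⟩ := by
  
  classical
  -- The center is contained in S₁
  have hcent : Subgroup.center G ≤ S₁ := by
    have hB : ∀ x ∈ S₁ ⊔ Subgroup.center G, ∀ y ∈ S₁ ⊔ Subgroup.center G, x * y = y * x := by
      intro x hx y hy
      rw [← SetLike.mem_coe, Subgroup.mul_normal] at hx hy
      obtain ⟨a, ha, z, hz, rfl⟩ := hx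
      obtain ⟨b, hb, w, hw, rfl⟩ := hy
      have hzc := Subgroup.mem_center_iff.mp hz
      have hwc := Subgroup.mem_center_iff.mp hw
      have hab := hS₁.1 a ha b hb
      calc a * z * (b * w) = a * (z * b) * w := by group
        _ = a * (b * z) * w := by rw [← hzc b]
        _ = (a * b) * (z * w) := by group
        _ = (b * a) * (w * z) := by rw [hab, hwc z]
        _ = b * (a * w) * z := by group
        _ = b * (w * a) * z := by rw [hwc a]
        _ = b * w * (a * z) := by group
    have := hS₁.2 _ hB le_sup_left
    exact le_sup_right.trans this.le
  -- S₁ is normal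
  have hnorm : ∀ (s : G), ∀ a ∈ S₁, s * a * s⁻¹ ∈ S₁ := by
    intro s a ha
    open scoped commutatorElement in
    have h1 : ⁅s, a⁆ ∈ commutator G := by
      rw [commutator_def]
      exact Subgroup.commutator_mem_commutator (Subgroup.mem_top s) (Subgroup.mem_top a)
    open scoped commutatorElement in
    have h2 : ⁅s, a⁆ ∈ S₁ := hcent (hcomm h1)
    open scoped commutatorElement in
    have heq : s * a * s⁻¹ = ⁅s, a⁆ * a := by group
    rw [heq]
    exact S₁.mul_mem h2 ha
  constructor
  · -- forward direction
    rintro ⟨e, he⟩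
    set f₀ : G → ℂ := fun x => if hx : x ∈ S₁ then ((lam₁ ⟨x, hx⟩ : ℂˣ) : ℂ) else 0 with hf₀def
    have hf₀pos : ∀ (x : G) (hx : x ∈ S₁), f₀ x = ((lam₁ ⟨x, hx⟩ : ℂˣ) : ℂ) :=
      fun x hx => dif_pos hx
    have hf₀neg : ∀ (x : G), x ∉ S₁ → f₀ x = 0 := fun x hx => dif_neg hx
    have hf₁mem : f₀ ∈ IndSpace S₁ lam₁ := by
      intro a x
      by_cases hx : x ∈ S₁
      · have hax : (a : G) * x ∈ S₁ := S₁.mul_mem a.2 hx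
        rw [hf₀pos _ hax, hf₀pos _ hx]
        have hmk : (⟨(a : G) * x, hax⟩ : ↥S₁) = a * ⟨x, hx⟩ := rfl
        rw [hmk, map_mul, Units.val_mul]
      · have hax : ¬ ((a : G) * x ∈ S₁) := by
          intro hmem
          exact hx (by simpa using S₁.mul_mem (S₁.inv_mem a.2) hmem)
        rw [hf₀neg _ hax, hf₀neg _ hx, mul_zero]
    set f₁ : ↥(IndSpace S₁ lam₁) := ⟨f₀, hf₁mem⟩ with hf₁def
    have hf₁ne : f₁ ≠ 0 := by
      intro hcontra
      have h1 : f₀ 1 = 0 := by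
        have := congrArg Subtype.val hcontra
        exact congrFun this 1
      rw [hf₀pos 1 S₁.one_mem] at h1
      have hone : (⟨1, S₁.one_mem⟩ : ↥S₁) = 1 := rfl
      rw [hone, map_one, Units.val_one] at h1
      exact one_ne_zero h1
    -- f₁ is a lam₁-eigenvector for right translation by S₁
    have hf₁eig : ∀ a : ↥S₁, IndRep S₁ lam₁ a f₁ = ((lam₁ a : ℂˣ) : ℂ) • f₁ := by
      intro a
      apply Subtype.ext
      funext x
      show f₀ (x * (a : G)) = (((lam₁ a : ℂˣ) : ℂ) • f₀) x
      rw [Pi.smul_apply, smul_eq_mul]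
      by_cases hx : x ∈ S₁
      · have hxa : x * (a : G) ∈ S₁ := S₁.mul_mem hx a.2
        rw [hf₀pos _ hxa, hf₀pos _ hx]
        have hmk : (⟨x * (a : G), hxa⟩ : ↥S₁) = ⟨x, hx⟩ * a := rfl
        rw [hmk, map_mul, Units.val_mul]
        ring
      · have hxa : ¬ (x * (a : G) ∈ S₁) := by
          intro hmem
          exact hx (by simpa using S₁.mul_mem hmem (S₁.inv_mem a.2))
        rw [hf₀neg _ hxa, hf₀neg _ hx, mul_zero]
    set g : ↥(IndSpace S₁ lam₂) := e f₁ with hgdef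
    have hgne : g ≠ 0 := by
      intro hcontra
      exact hf₁ne (by simpa using e.injective (hcontra.trans (map_zero e).symm))
    have hgeig : ∀ (a : ↥S₁) (x : G),
        (g : G → ℂ) (x * (a : G)) = ((lam₁ a : ℂˣ) : ℂ) * (g : G → ℂ) x := by
      intro a x
      have h1 : e (IndRep S₁ lam₁ a f₁) = IndRep S₁ lam₂ a g := he a f₁
      rw [hf₁eig a, map_smul] at h1
      calc (g : G → ℂ) (x * (a : G)) = (IndRep S₁ lam₂ a g : G → ℂ) x := rfl
        _ = ((((lam₁ a : ℂˣ) : ℂ) • g : ↥(IndSpace S₁ lam₂)) : G → ℂ) x := by rw [← h1]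
        _ = ((lam₁ a : ℂˣ) : ℂ) * (g : G → ℂ) x := by
            rw [SetLike.val_smul, Pi.smul_apply, smul_eq_mul]
    -- pick a point where g is nonzero
    have hexists : ∃ x₀ : G, (g : G → ℂ) x₀ ≠ 0 := by
      by_contra hcontra
      push_neg at hcontra
      exact hgne (Subtype.ext (funext hcontra))
    obtain ⟨x₀, hx₀⟩ := hexists
    refine ⟨x₀, fun x hx hx' => ?_⟩
    have e1 : (g : G → ℂ) (x₀ * x) = ((lam₁ ⟨x, hx⟩ : ℂˣ) : ℂ) * (g : G → ℂ) x₀ :=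
      hgeig ⟨x, hx⟩ x₀
    have e2 : (g : G → ℂ) (x₀ * x) = ((lam₂ ⟨x₀ * x * x₀⁻¹, hx'⟩ : ℂˣ) : ℂ) * (g : G → ℂ) x₀ := by
      have := mem_IndSpace.mp g.2 ⟨x₀ * x * x₀⁻¹, hx'⟩ x₀
      simpa [mul_assoc] using this
    exact Units.ext (mul_right_cancel₀ hx₀ (e1.symm.trans e2))
  · -- reverse direction
    rintro ⟨s, h⟩
    have key₁ : ∀ (a : ↥S₁), ((lam₁ a : ℂˣ) : ℂ) =
        ((lam₂ ⟨s * (a : G) * s⁻¹, hnorm s _ a.2⟩ : ℂˣ) : ℂ) := by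
      intro a
      rw [h (a : G) a.2 (hnorm s _ a.2)]
    have key₂ : ∀ (a : ↥S₁), ((lam₂ a : ℂˣ) : ℂ) =
        ((lam₁ ⟨s⁻¹ * (a : G) * s, by simpa using hnorm s⁻¹ _ a.2⟩ : ℂˣ) : ℂ) := by
      intro a
      have hmem : s⁻¹ * (a : G) * s ∈ S₁ := by simpa using hnorm s⁻¹ _ a.2
      have hmem' : s * (s⁻¹ * (a : G) * s) * s⁻¹ ∈ S₁ := by
        have heq : s * (s⁻¹ * (a : G) * s) * s⁻¹ = (a : G) := by group
        rw [heq]; exact a.2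
      have hval := h (s⁻¹ * (a : G) * s) hmem hmem'
      have heq : (⟨s * (s⁻¹ * (a : G) * s) * s⁻¹, hmem'⟩ : ↥S₁) = a := by
        apply Subtype.ext
        show s * (s⁻¹ * (a : G) * s) * s⁻¹ = (a : G)
        group
      rw [heq] at hval
      rw [hval]
    have memto : ∀ F : ↥(IndSpace S₁ lam₁),
        (fun x => (F : G → ℂ) (s⁻¹ * x)) ∈ IndSpace S₁ lam₂ := by
      intro F a x
      show (F : G → ℂ) (s⁻¹ * ((a : G) * x)) =
        ((lam₂ a : ℂˣ) : ℂ) * (F : G → ℂ) (s⁻¹ * x)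
      have hmem : s⁻¹ * (a : G) * s ∈ S₁ := by simpa using hnorm s⁻¹ _ a.2
      have h1 : s⁻¹ * ((a : G) * x) = (s⁻¹ * (a : G) * s) * (s⁻¹ * x) := by group
      rw [h1, mem_IndSpace.mp F.2 ⟨s⁻¹ * (a : G) * s, hmem⟩ (s⁻¹ * x)]
      congr 1
      exact (key₂ a).symm
    have memfrom : ∀ F : ↥(IndSpace S₁ lam₂),
        (fun x => (F : G → ℂ) (s * x)) ∈ IndSpace S₁ lam₁ := by
      intro F a x
      show (F : G → ℂ) (s * ((a : G) * x)) =
        ((lam₁ a : ℂˣ) : ℂ) * (F : G → ℂ) (s * x)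
      have hmem : s * (a : G) * s⁻¹ ∈ S₁ := hnorm s _ a.2
      have h1 : s * ((a : G) * x) = (s * (a : G) * s⁻¹) * (s * x) := by group
      rw [h1, mem_IndSpace.mp F.2 ⟨s * (a : G) * s⁻¹, hmem⟩ (s * x)]
      congr 1
      exact (key₁ a).symm
    refine ⟨{ toFun := fun F => ⟨fun x => (F : G → ℂ) (s⁻¹ * x), memto F⟩
              map_add' := by intro F₁ F₂; apply Subtype.ext; funext x; rfl
              map_smul' := by intro c F; apply Subtype.ext; funext x; rfl
              invFun := fun F => ⟨fun x => (F : G → ℂ) (s * x), memfrom F⟩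
              left_inv := by
                intro F; apply Subtype.ext; funext x
                show (F : G → ℂ) (s⁻¹ * (s * x)) = (F : G → ℂ) x
                rw [inv_mul_cancel_left]
              right_inv := by
                intro F; apply Subtype.ext; funext x
                show (F : G → ℂ) (s * (s⁻¹ * x)) = (F : G → ℂ) x
                rw [mul_inv_cancel_left] }, ?_⟩
    intro g₀ F
    apply Subtype.ext
    funext x
    show (F : G → ℂ) (s⁻¹ * x * g₀) = (F : G → ℂ) (s⁻¹ * (x * g₀))
    rw [mul_assoc]
end

section
/- Let O be the ring of integers of a non-Archimedean local field of odd residue characteristic, with uniformizer ϖ, and let m ≥ 1. Let Γ₀(ϖ^m) be the subgroup of SL₂(O) consisting of matrices whose lower-left entry lies in ϖ^m O. Then every group homomorphism χ : Γ₀(ϖ^m) → {±1} that is trivial on all diagonal matrices diag(u, u^{-1}) with u ∈ O^× is trivial. -/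
open Matrix IsLocalRing

def lowerSL {O : Type*} [CommRing O] (c : O) : Matrix.SpecialLinearGroup (Fin 2) O :=
  ⟨!![1, 0; c, 1], by simp [Matrix.det_fin_two_of]⟩

def upperSL {O : Type*} [CommRing O] (b : O) : Matrix.SpecialLinearGroup (Fin 2) O :=
  ⟨!![1, b; 0, 1], by simp [Matrix.det_fin_two_of]⟩

lemma lowerSL_mul {O : Type*} [CommRing O] (c c' : O) :
    lowerSL c * lowerSL c' = lowerSL (c + c') := by
  apply Subtype.ext
  show (!![(1:O),0;c,1] * !![1,0;c',1]) = _
  rw [Matrix.mul_fin_two]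
  simp [lowerSL, add_comm]

lemma upperSL_mul {O : Type*} [CommRing O] (b b' : O) :
    upperSL b * upperSL b' = upperSL (b + b') := by
  apply Subtype.ext
  show (!![(1:O),b;0,1] * !![1,b';0,1]) = _
  rw [Matrix.mul_fin_two]
  simp [upperSL, add_comm]

lemma isUnit_one_add_mem {O : Type*} [CommRing O] [IsLocalRing O] (x : O)
    (hx : x ∈ maximalIdeal O) : IsUnit (1 + x) := by
  by_contra h
  have h1 : (1 + x) ∈ maximalIdeal O := h
  have : (1 : O) ∈ maximalIdeal O := by
    have h2 := Ideal.sub_mem _ h1 hx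
    rwa [add_sub_cancel_right] at h2
  exact (Ideal.IsMaximal.ne_top inferInstance) (Ideal.eq_top_of_isUnit_mem _ this isUnit_one)

lemma isUnit_two_of_odd {O : Type*} [CommRing O] [IsLocalRing O]
    (hodd : ringChar (IsLocalRing.ResidueField O) ≠ 2) : IsUnit (2 : O) := by
  by_contra h
  have h1 : (2 : O) ∈ maximalIdeal O := h
  have h2 : ((2 : ℕ) : ResidueField O) = 0 := by
    have hc : ((2 : ℕ) : O) = 2 := by norm_num
    rw [← map_natCast (IsLocalRing.residue O) 2, hc, IsLocalRing.residue_eq_zero_iff]; exact h1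
  have h4 : ringChar (ResidueField O) ∣ 2 := (ringChar.spec _ 2).mp h2
  rcases (Nat.prime_two.eq_one_or_self_of_dvd _ h4) with h5 | h5
  · exact CharP.ringChar_ne_one h5
  · exact hodd h5

/-- The congruence subgroup `Γ₀(x)` of `SL₂(O)`: matrices whose lower-left entry lies in the
ideal generated by `x`. -/
def Gamma0 (O : Type*) [CommRing O] (x : O) :
    Subgroup (Matrix.SpecialLinearGroup (Fin 2) O) where
  carrier := {A | (A : Matrix (Fin 2) (Fin 2) O) 1 0 ∈ Ideal.span {x}}
  one_mem' := by
    simp only [Set.mem_setOf_eq]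
    simp
  mul_mem' := by
    intro A B hA hB
    simp only [Set.mem_setOf_eq] at hA hB ⊢
    have h : ((A * B : Matrix.SpecialLinearGroup (Fin 2) O) : Matrix (Fin 2) (Fin 2) O) 1 0 =
        (A : Matrix (Fin 2) (Fin 2) O) 1 0 * (B : Matrix (Fin 2) (Fin 2) O) 0 0 +
        (A : Matrix (Fin 2) (Fin 2) O) 1 1 * (B : Matrix (Fin 2) (Fin 2) O) 1 0 := by
      simp [Matrix.mul_apply, Fin.sum_univ_two]
    rw [h]
    exact Ideal.add_mem _ (Ideal.mul_mem_right _ _ hA) (Ideal.mul_mem_left _ _ hB)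
  inv_mem' := by
    intro A hA
    simp only [Set.mem_setOf_eq] at hA ⊢
    have h : ((A⁻¹ : Matrix.SpecialLinearGroup (Fin 2) O) : Matrix (Fin 2) (Fin 2) O) 1 0 =
        -(A : Matrix (Fin 2) (Fin 2) O) 1 0 := by
      simp [Matrix.SpecialLinearGroup.coe_inv, Matrix.adjugate_fin_two]
    rw [h]
    exact neg_mem hA

/-- The diagonal matrix `diag(u, u⁻¹)` as an element of `SL₂(O)`. -/
def diagSL {O : Type*} [CommRing O] (u : Oˣ) : Matrix.SpecialLinearGroup (Fin 2) O :=
  ⟨!![(u : O), 0; 0, ((u⁻¹ : Oˣ) : O)], by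
    simp [Matrix.det_fin_two_of]⟩

/-- Let `O` be the ring of integers of a non-Archimedean local field of odd
residue characteristic, with uniformizer `ϖ`, and let `m ≥ 1`.  Then every group homomorphism
`χ : Γ₀(ϖ^m) → {±1}` that is trivial on all diagonal matrices `diag(u, u⁻¹)`, `u ∈ O^×`,
is trivial. -/
theorem gamma0_quadratic_character_trivial_on_diagonal_is_trivial
    (O : Type*) [CommRing O] [IsDomain O] [IsDiscreteValuationRing O]
    [IsAdicComplete (IsLocalRing.maximalIdeal O) O]
    [Finite (IsLocalRing.ResidueField O)]
    (hodd : ringChar (IsLocalRing.ResidueField O) ≠ 2)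
    (ϖ : O) (hϖ : Irreducible ϖ) (m : ℕ) (hm : 1 ≤ m)
    (χ : ↥(Gamma0 O (ϖ ^ m)) →* ℤˣ)
    (hdiag : ∀ (u : Oˣ) (h : diagSL u ∈ Gamma0 O (ϖ ^ m)), χ ⟨diagSL u, h⟩ = 1) :
    χ = 1 := by
  
  have h2 : IsUnit (2 : O) := isUnit_two_of_odd hodd
  obtain ⟨t, ht⟩ := h2
  have hspan : Ideal.span {ϖ ^ m} ≤ IsLocalRing.maximalIdeal O := by
    rw [Ideal.span_le, Set.singleton_subset_iff]
    exact Ideal.pow_mem_of_mem _ (hϖ.not_isUnit) m hm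
  have hsq : ∀ g : ↥(Gamma0 O (ϖ ^ m)), χ (g * g) = 1 := by
    intro g; rw [_root_.map_mul]; exact Int.units_mul_self _
  have hhalf : ∀ x : O, (↑t⁻¹ * x) + (↑t⁻¹ * x) = x := by
    intro x
    have : (↑t : O) * (↑t⁻¹ * x) = x := by
      rw [← mul_assoc, Units.mul_inv, one_mul]
    calc (↑t⁻¹ * x) + (↑t⁻¹ * x) = 2 * (↑t⁻¹ * x) := (two_mul _).symm
      _ = (↑t : O) * (↑t⁻¹ * x) := by rw [ht]
      _ = x := this
  have hlowmem : ∀ c : O, c ∈ Ideal.span {ϖ ^ m} → lowerSL c ∈ Gamma0 O (ϖ ^ m) := by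
    intro c hc
    show ((lowerSL c : Matrix (Fin 2) (Fin 2) O)) 1 0 ∈ Ideal.span {ϖ ^ m}
    simpa [lowerSL] using hc
  have huppmem : ∀ b : O, upperSL b ∈ Gamma0 O (ϖ ^ m) := by
    intro b
    show ((upperSL b : Matrix (Fin 2) (Fin 2) O)) 1 0 ∈ Ideal.span {ϖ ^ m}
    simp [upperSL]
  have hlow : ∀ (c : O) (hc : c ∈ Ideal.span {ϖ ^ m}), χ ⟨lowerSL c, hlowmem c hc⟩ = 1 := by
    intro c hc
    have hc' : (↑t⁻¹ * c) ∈ Ideal.span {ϖ ^ m} := Ideal.mul_mem_left _ _ hc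
    have heq : (⟨lowerSL (↑t⁻¹ * c), hlowmem _ hc'⟩ : ↥(Gamma0 O (ϖ ^ m))) *
        ⟨lowerSL (↑t⁻¹ * c), hlowmem _ hc'⟩ = ⟨lowerSL c, hlowmem c hc⟩ := by
      apply Subtype.ext
      show lowerSL (↑t⁻¹ * c) * lowerSL (↑t⁻¹ * c) = lowerSL c
      rw [lowerSL_mul, hhalf]
    rw [← heq]
    exact hsq _
  have hupp : ∀ b : O, χ ⟨upperSL b, huppmem b⟩ = 1 := by
    intro b
    have heq : (⟨upperSL (↑t⁻¹ * b), huppmem _⟩ : ↥(Gamma0 O (ϖ ^ m))) *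
        ⟨upperSL (↑t⁻¹ * b), huppmem _⟩ = ⟨upperSL b, huppmem b⟩ := by
      apply Subtype.ext
      show upperSL (↑t⁻¹ * b) * upperSL (↑t⁻¹ * b) = upperSL b
      rw [upperSL_mul, hhalf]
    rw [← heq]
    exact hsq _
  ext g
  obtain ⟨A, hA⟩ := g
  set M : Matrix (Fin 2) (Fin 2) O := (A : Matrix (Fin 2) (Fin 2) O) with hM
  have hdet : M 0 0 * M 1 1 - M 0 1 * M 1 0 = 1 := by
    rw [← Matrix.det_fin_two]; exact A.prop
  have hc : M 1 0 ∈ Ideal.span {ϖ ^ m} := hA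
  have hbc : M 0 1 * M 1 0 ∈ IsLocalRing.maximalIdeal O := hspan (Ideal.mul_mem_left _ _ hc)
  have hu : IsUnit (M 0 0) := by
    have h1 : IsUnit (1 + M 0 1 * M 1 0) := isUnit_one_add_mem _ hbc
    have h2 : M 0 0 * M 1 1 = 1 + M 0 1 * M 1 0 := by linear_combination hdet
    exact isUnit_of_mul_isUnit_left (h2 ▸ h1)
  obtain ⟨ua, hua⟩ := hu
  have hinv : (↑ua⁻¹ : O) * ↑ua = 1 := Units.inv_mul ua
  have hinv' : (↑ua : O) * ↑ua⁻¹ = 1 := Units.mul_inv ua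
  have hdmem : diagSL ua ∈ Gamma0 O (ϖ ^ m) := by
    show ((diagSL ua : Matrix (Fin 2) (Fin 2) O)) 1 0 ∈ Ideal.span {ϖ ^ m}
    simp [diagSL]
  have hcmem : M 1 0 * ↑ua⁻¹ ∈ Ideal.span {ϖ ^ m} := Ideal.mul_mem_right _ _ hc
  have hfac : (⟨A, hA⟩ : ↥(Gamma0 O (ϖ ^ m))) =
      ⟨lowerSL (M 1 0 * ↑ua⁻¹), hlowmem _ hcmem⟩ * ⟨diagSL ua, hdmem⟩ *
      ⟨upperSL (↑ua⁻¹ * M 0 1), huppmem _⟩ := by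
    apply Subtype.ext
    show A = lowerSL (M 1 0 * ↑ua⁻¹) * diagSL ua * upperSL (↑ua⁻¹ * M 0 1)
    apply Subtype.ext
    show M = _
    show M = (!![1, 0; M 1 0 * ↑ua⁻¹, 1] * !![(↑ua : O), 0; 0, ↑ua⁻¹] *
      !![1, ↑ua⁻¹ * M 0 1; 0, 1] : Matrix (Fin 2) (Fin 2) O)
    rw [Matrix.mul_fin_two, Matrix.mul_fin_two]
    rw [Matrix.eta_fin_two M]
    ext i j
    fin_cases i <;> fin_cases j <;> simp only [Matrix.cons_val_zero, Matrix.cons_val_one,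
      Matrix.head_cons, Matrix.head_fin_const, Matrix.of_apply, Matrix.cons_val',
      Matrix.empty_val', Matrix.cons_val_fin_one, Fin.isValue, Fin.mk_zero, Fin.mk_one]
    · linear_combination -hua
    · linear_combination (-(M 0 1)) * hinv'
    · linear_combination (-(M 1 0)) * hinv
    · linear_combination (-(M 1 1) - (↑ua⁻¹ : O) * M 0 1 * M 1 0) * hinv + (↑ua⁻¹ : O) * hdet
        + (↑ua⁻¹ : O) * M 1 1 * hua
  rw [hfac, _root_.map_mul, _root_.map_mul, hlow _ hcmem, hdiag ua hdmem, hupp]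
  rfl
end
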